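/- The Schouten–Nijenhuis bracket of the bivector π_B = Σᵢ ∂/∂xᵢ ∧ ∂/∂pᵢ + x₂² ∂/∂p₂ ∧ ∂/∂p₃ + x₁x₂ ∂/∂p₁ ∧ ∂/∂p₃ with itself equals [π_B, π_B] = 2x₁ ∂/∂p₁ ∧ ∂/∂p₂ ∧ ∂/∂p₃. In particular, π_B is not a Poisson bivector since its jacobiator is nonzero wherever x₁ ≠ 0. -/

import Mathlib

open scoped BigOperators

noncomputable section

/-- Phase space ℝ⁶ with coordinates (x₁,x₂,x₃,p₁,p₂,p₃) indexed by 0,…,5. -/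
abbrev M6 := Fin 6 → ℝ

/-- Partial derivative in the `i`-th coordinate direction. -/
def pd (i : Fin 6) (F : M6 → ℝ) (m : M6) : ℝ := fderiv ℝ F m (Pi.single i 1)

/-- Kronecker delta, viewed as the components of the coordinate 1-form `dx_a`. -/
def dd (a i : Fin 6) : ℝ := if a = i then 1 else 0

/-- Components of `dx_a ∧ dx_b` (equivalently of `∂_a ∧ ∂_b`). -/
def w2 (a b i j : Fin 6) : ℝ := dd a i * dd b j - dd a j * dd b i

/-- Components of `dx_a ∧ dx_b ∧ dx_c` (equivalently of `∂_a ∧ ∂_b ∧ ∂_c`). -/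
def w3 (a b c i j k : Fin 6) : ℝ :=
  dd a i * (dd b j * dd c k - dd b k * dd c j)
    - dd a j * (dd b i * dd c k - dd b k * dd c i)
    + dd a k * (dd b i * dd c j - dd b j * dd c i)

/-- Components of the 2-form ω_B = Σᵢ dxᵢ∧dpᵢ + x₂² dx₂∧dx₃ + x₁x₂ dx₁∧dx₃. -/
def ωB (m : M6) (i j : Fin 6) : ℝ :=
  w2 0 3 i j + w2 1 4 i j + w2 2 5 i j
    + (m 1) ^ 2 * w2 1 2 i j + m 0 * m 1 * w2 0 2 i j

/-- Components of the bivector π_B = Σᵢ ∂xᵢ∧∂pᵢ + x₂² ∂p₂∧∂p₃ + x₁x₂ ∂p₁∧∂p₃. -/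
def πB (m : M6) (i j : Fin 6) : ℝ :=
  w2 0 3 i j + w2 1 4 i j + w2 2 5 i j
    + (m 1) ^ 2 * w2 4 5 i j + m 0 * m 1 * w2 3 5 i j

/-- Components of the Schouten–Nijenhuis bracket `[π,π]` of a bivector field. -/
def sch (π : M6 → Fin 6 → Fin 6 → ℝ) (m : M6) (i j k : Fin 6) : ℝ :=
  2 * ∑ l, (π m i l * pd l (fun x => π x j k) m
      + π m j l * pd l (fun x => π x k i) m
      + π m k l * pd l (fun x => π x i j) m)


lemma pd_piB (l j k : Fin 6) (m : M6) :
    pd l (fun x => πB x j k) m =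
      2 * m 1 * dd 1 l * w2 4 5 j k + (dd 0 l * m 1 + m 0 * dd 1 l) * w2 3 5 j k := by
  have h0 : HasFDerivAt (fun x : M6 => x 0) (ContinuousLinearMap.proj 0 : M6 →L[ℝ] ℝ) m :=
    hasFDerivAt_apply 0 m
  have h1 : HasFDerivAt (fun x : M6 => x 1) (ContinuousLinearMap.proj 1 : M6 →L[ℝ] ℝ) m :=
    hasFDerivAt_apply 1 m
  have hA := (h1.mul h1).mul_const (w2 4 5 j k)
  have hB := (h0.mul h1).mul_const (w2 3 5 j k)
  have H := (hA.add hB).const_add (w2 0 3 j k + w2 1 4 j k + w2 2 5 j k)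
  have hfun : (fun x : M6 => πB x j k)
      = fun x : M6 => (w2 0 3 j k + w2 1 4 j k + w2 2 5 j k)
          + (x 1 * x 1 * w2 4 5 j k + x 0 * x 1 * w2 3 5 j k) := by
    funext x; simp only [πB, pow_two]; ring
  rw [pd, hfun]
  erw [H.fderiv]
  simp [dd, Pi.single_apply, eq_comm]
  split_ifs <;> ring

set_option maxHeartbeats 1000000 in
lemma sch_eq (m : M6) (i j k : Fin 6) : sch πB m i j k = 2 * m 0 * w3 3 4 5 i j k := by
  simp only [sch, Fin.sum_univ_six, pd_piB]
  simp only [πB, w2, w3,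
    show dd 0 0 = (1:ℝ) by simp [dd],
    show dd 0 1 = (0:ℝ) by simp [dd],
    show dd 0 2 = (0:ℝ) by simp [dd],
    show dd 0 3 = (0:ℝ) by simp [dd],
    show dd 0 4 = (0:ℝ) by simp [dd],
    show dd 0 5 = (0:ℝ) by simp [dd],
    show dd 1 0 = (0:ℝ) by simp [dd],
    show dd 1 1 = (1:ℝ) by simp [dd],
    show dd 1 2 = (0:ℝ) by simp [dd],
    show dd 1 3 = (0:ℝ) by simp [dd],
    show dd 1 4 = (0:ℝ) by simp [dd],
    show dd 1 5 = (0:ℝ) by simp [dd],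
    show dd 2 0 = (0:ℝ) by simp [dd],
    show dd 2 1 = (0:ℝ) by simp [dd],
    show dd 2 2 = (1:ℝ) by simp [dd],
    show dd 2 3 = (0:ℝ) by simp [dd],
    show dd 2 4 = (0:ℝ) by simp [dd],
    show dd 2 5 = (0:ℝ) by simp [dd],
    show dd 3 0 = (0:ℝ) by simp [dd],
    show dd 3 1 = (0:ℝ) by simp [dd],
    show dd 3 2 = (0:ℝ) by simp [dd],
    show dd 3 3 = (1:ℝ) by simp [dd],
    show dd 3 4 = (0:ℝ) by simp [dd],
    show dd 3 5 = (0:ℝ) by simp [dd],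
    show dd 4 0 = (0:ℝ) by simp [dd],
    show dd 4 1 = (0:ℝ) by simp [dd],
    show dd 4 2 = (0:ℝ) by simp [dd],
    show dd 4 3 = (0:ℝ) by simp [dd],
    show dd 4 4 = (1:ℝ) by simp [dd],
    show dd 4 5 = (0:ℝ) by simp [dd],
    show dd 5 0 = (0:ℝ) by simp [dd],
    show dd 5 1 = (0:ℝ) by simp [dd],
    show dd 5 2 = (0:ℝ) by simp [dd],
    show dd 5 3 = (0:ℝ) by simp [dd],
    show dd 5 4 = (0:ℝ) by simp [dd],
    show dd 5 5 = (1:ℝ) by simp [dd]]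
  ring

/-- `[π_B,π_B] = 2x₁ ∂p₁∧∂p₂∧∂p₃`; in particular π_B is not Poisson, since its
jacobiator is nonzero wherever x₁ ≠ 0. -/
theorem schouten_piB :
    (∀ m : M6, ∀ i j k, sch πB m i j k = 2 * m 0 * w3 3 4 5 i j k) ∧
    (∀ m : M6, m 0 ≠ 0 → ∃ i j k, sch πB m i j k ≠ 0) := by
  refine ⟨fun m i j k => sch_eq m i j k, fun m hm => ⟨3, 4, 5, ?_⟩⟩
  rw [sch_eq]
  have : w3 3 4 5 3 4 5 = 1 := by simp [w3, dd]
  rw [this]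
  simpa using hm

end
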